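/- Every feasible solution of the counterexample instance in which some robot r sprays the full capacity on edge {2,3}, i.e. y_r({2,3}) = 8 (and hence y_r(e) = 0 for every other edge e), has cost at least 9. -/

import Mathlib

/-- The counterexample graph of the paper's Theorem 2: the 4-cycle `0-1-2-3-0` together
with the chord `{0,2}` (vertices `0,1,2,3` stand for the paper's vertices `1,2,3,4`;
the depot is vertex `0`; the missing edge `{1,3}` is the paper's `{2,4}`). -/
def CG : SimpleGraph (Fin 4) where
  Adj a b := a ≠ b ∧ s(a, b) ≠ s(1, 3)
  symm := by
    refine ⟨?_⟩
    intro a b h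
    exact ⟨h.1.symm, by rw [Sym2.eq_swap]; exact h.2⟩
  loopless := by
    refine ⟨?_⟩
    intro a h
    exact h.1 rfl

instance : DecidableRel CG.Adj := fun a b =>
  decidable_of_iff (a ≠ b ∧ s(a, b) ≠ s(1, 3)) Iff.rfl

/-- Demands: `12` on the edge `{1,2}` (the paper's `{2,3}`) and `1` on every other edge. -/
noncomputable def Dem : Sym2 (Fin 4) → ℝ := fun e => if e = s(1, 2) then 12 else 1

/-- A feasible solution: a finite family of closed walks at the depot `0` together with
nonnegative sprays `y r e`, where `y r e > 0` only if robot `r`'s walk traverses `e`,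
each robot sprays at most the capacity `8` in total, and the total spray on each edge
equals its demand. -/
def Feasible {R : ℕ} (walk : Fin R → CG.Walk 0 0)
    (y : Fin R → Sym2 (Fin 4) → ℝ) : Prop :=
  (∀ r e, 0 ≤ y r e) ∧
  (∀ r e, 0 < y r e → e ∈ (walk r).edges) ∧
  (∀ r, ∑ e ∈ CG.edgeFinset, y r e ≤ 8) ∧
  (∀ e ∈ CG.edgeSet, ∑ r, y r e = Dem e)

lemma list_length_eq_sum_count' {α : Type*} [DecidableEq α] (l : List α) (E : Finset α)
    (h : ∀ x ∈ l, x ∈ E) : l.length = ∑ e ∈ E, l.count e := by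
  classical
  have h1 : ∑ a ∈ l.toFinset, l.count a = l.length := by
    simpa using Multiset.toFinset_sum_count_eq (l : Multiset α)
  rw [← h1]
  exact Finset.sum_subset (fun x hx => h x (List.mem_toFinset.mp hx))
    (fun x _ hx => List.count_eq_zero.mpr (fun hm => hx (List.mem_toFinset.mpr hm)))

lemma count_filter_eq' {α : Type*} [DecidableEq α] (l : List α) (p : α → Bool) (a : α) :
    (l.filter p).count a = if p a then l.count a else 0 := by
  by_cases h : p a
  · simp [List.count_filter, h]
  · simp [List.count_eq_zero, h]

lemma sum_if_count_eq_countP' {α : Type*} [DecidableEq α] (l : List α) (E : Finset α)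
    (h : ∀ x ∈ l, x ∈ E) (p : α → Bool) :
    ∑ e ∈ E, (if p e then l.count e else 0) = l.countP p := by
  have h2 : ∑ e ∈ E, (if p e then l.count e else 0) = ∑ e ∈ E, (l.filter p).count e := by
    refine Finset.sum_congr rfl fun e _ => ?_
    rw [count_filter_eq']
  rw [h2, ← list_length_eq_sum_count' (l.filter p) E
      (fun x hx => h x (List.mem_of_mem_filter hx)), List.countP_eq_length_filter]

lemma walk_countP_parity' {V : Type*} [DecidableEq V] {G : SimpleGraph V} (x : V) :
    ∀ {u v : V} (p : G.Walk u v),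
      (p.edges.countP fun e => x ∈ e) % 2
        = ((if x = u then 1 else 0) + (if x = v then 1 else 0)) % 2 := by
  intro u v p
  induction p with
  | nil => split_ifs <;> simp
  | @cons u w v huv p ih =>
    simp only [SimpleGraph.Walk.edges_cons, List.countP_cons, ih, Sym2.mem_iff,
      decide_eq_true_eq]
    have hne : u ≠ w := huv.ne
    by_cases h1 : x = u <;> by_cases h2 : x = w <;>
      simp only [h1, h2, if_pos, if_neg, eq_self_iff_true, not_false_iff] <;>
      simp_all <;> omega

lemma walk_first_edge' {V : Type*} {G : SimpleGraph V} {u v : V} (p : G.Walk u v)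
    (h : p.edges ≠ []) : ∃ e ∈ p.edges, u ∈ e := by
  cases p with
  | nil => simp at h
  | @cons u w v huv p => exact ⟨s(u, w), by simp, by simp⟩

/-- Every feasible solution of the counterexample instance in which some robot sprays
the full capacity `8` on the edge `{2,3}` of the paper (here `{1,2}`) has cost at
least `9`. -/
theorem counterexample_full_capacity_cost_lower_bound_nine
    (R : ℕ) (walk : Fin R → CG.Walk 0 0) (y : Fin R → Sym2 (Fin 4) → ℝ)
    (hfeas : Feasible walk y)
    (hfull : ∃ r, y r s(1, 2) = 8) :
    9 ≤ ∑ r, (walk r).length := by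
  classical
  obtain ⟨h0, h1, h2, h3⟩ := hfeas
  obtain ⟨r, hr⟩ := hfull
  have hE : CG.edgeFinset
      = ({s(0,1), s(0,2), s(0,3), s(1,2), s(2,3)} : Finset (Sym2 (Fin 4))) := by decide
  have hmemE : ∀ s : Fin R, ∀ e ∈ (walk s).edges, e ∈ CG.edgeFinset := fun s e he =>
    SimpleGraph.mem_edgeFinset.mpr ((walk s).edges_subset_edgeSet he)
  -- abbreviation for counts
  set c : Fin R → Sym2 (Fin 4) → ℕ := fun s e => (walk s).edges.count e with hc
  -- sum over the explicit 5 edges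
  have sum5 : ∀ {M : Type} [AddCommMonoid M] (f : Sym2 (Fin 4) → M),
      ∑ e ∈ CG.edgeFinset, f e
        = f s(0,1) + f s(0,2) + f s(0,3) + f s(1,2) + f s(2,3) := by
    intro M _ f
    rw [hE, Finset.sum_insert (by decide), Finset.sum_insert (by decide),
      Finset.sum_insert (by decide), Finset.sum_insert (by decide), Finset.sum_singleton]
    abel
  have hlen : ∀ s, (walk s).length
      = c s s(0,1) + c s s(0,2) + c s s(0,3) + c s s(1,2) + c s s(2,3) := fun s => by
    rw [← SimpleGraph.Walk.length_edges, list_length_eq_sum_count' _ _ (hmemE s), sum5]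
  -- parity of incidence at a vertex
  have parity : ∀ (s : Fin R) (x : Fin 4),
      (∑ e ∈ CG.edgeFinset, if x ∈ e then c s e else 0) % 2 = 0 := by
    intro s x
    rw [show (∑ e ∈ CG.edgeFinset, if x ∈ e then c s e else 0)
        = ∑ e ∈ CG.edgeFinset, (if decide (x ∈ e) then (walk s).edges.count e else 0) by
      refine Finset.sum_congr rfl fun e _ => ?_; simp [hc]]
    rw [sum_if_count_eq_countP' _ _ (hmemE s) (fun e => decide (x ∈ e))]
    rw [walk_countP_parity' x (walk s)]
    split_ifs <;> rfl
  have par1 : ∀ s, (c s s(0,1) + c s s(1,2)) % 2 = 0 := by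
    intro s
    have h := parity s 1
    rw [sum5] at h
    simp only [Sym2.mem_iff,
      show ((1:Fin 4) = 0 ∨ (1:Fin 4) = 1) from by decide,
      show ¬((1:Fin 4) = 0 ∨ (1:Fin 4) = 2) from by decide,
      show ¬((1:Fin 4) = 0 ∨ (1:Fin 4) = 3) from by decide,
      show ((1:Fin 4) = 1 ∨ (1:Fin 4) = 2) from by decide,
      show ¬((1:Fin 4) = 2 ∨ (1:Fin 4) = 3) from by decide,
      true_or, or_true, if_true, if_false, zero_add, add_zero] at h
    omega
  have par0 : ∀ s, (c s s(0,1) + c s s(0,2) + c s s(0,3)) % 2 = 0 := by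
    intro s
    have h := parity s 0
    rw [sum5] at h
    simp only [Sym2.mem_iff,
      show ((0:Fin 4) = 0 ∨ (0:Fin 4) = 1) from by decide,
      show ((0:Fin 4) = 0 ∨ (0:Fin 4) = 2) from by decide,
      show ((0:Fin 4) = 0 ∨ (0:Fin 4) = 3) from by decide,
      show ¬((0:Fin 4) = 1 ∨ (0:Fin 4) = 2) from by decide,
      show ¬((0:Fin 4) = 2 ∨ (0:Fin 4) = 3) from by decide,
      true_or, or_true, if_true, if_false, zero_add, add_zero] at h
    omega
  have par2 : ∀ s, (c s s(0,2) + c s s(1,2) + c s s(2,3)) % 2 = 0 := by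
    intro s
    have h := parity s 2
    rw [sum5] at h
    simp only [Sym2.mem_iff,
      show ¬((2:Fin 4) = 0 ∨ (2:Fin 4) = 1) from by decide,
      show ((2:Fin 4) = 0 ∨ (2:Fin 4) = 2) from by decide,
      show ¬((2:Fin 4) = 0 ∨ (2:Fin 4) = 3) from by decide,
      show ((2:Fin 4) = 1 ∨ (2:Fin 4) = 2) from by decide,
      show ((2:Fin 4) = 2 ∨ (2:Fin 4) = 3) from by decide,
      true_or, or_true, if_true, if_false, zero_add, add_zero] at h
    omega
  -- robot r traverses s(1,2)
  have hp12 : s(1,2) ∈ (walk r).edges := h1 r s(1,2) (by rw [hr]; norm_num)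
  have hc12 : 1 ≤ c r s(1,2) := List.count_pos_iff.mpr hp12
  -- robot r's walk starts at 0, so some edge contains 0
  have hne : (walk r).edges ≠ [] := by
    intro hnil; rw [hnil] at hp12; simp at hp12
  obtain ⟨e0, he0, h0e⟩ := walk_first_edge' (walk r) hne
  have hsum0 : 1 ≤ c r s(0,1) + c r s(0,2) + c r s(0,3) := by
    have he5 := hmemE r e0 he0
    rw [hE] at he5
    have hcnt : 1 ≤ c r e0 := List.count_pos_iff.mpr he0
    simp only [Finset.mem_insert, Finset.mem_singleton] at he5
    rcases he5 with rfl | rfl | rfl | rfl | rfl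
    · omega
    · omega
    · omega
    · exact absurd h0e (by decide)
    · exact absurd h0e (by decide)
  have hlenr : 3 ≤ (walk r).length := by
    rw [hlen r]
    have := par1 r; have := par0 r
    omega
  -- the other robots
  set S : Finset (Fin R) := Finset.univ.erase r with hS
  -- y r vanishes off s(1,2)
  have h12mem : s(1,2) ∈ CG.edgeFinset := by rw [hE]; decide
  have hy0 : ∀ e ∈ CG.edgeFinset.erase s(1,2), y r e = 0 := by
    have hcap := h2 r
    rw [← Finset.insert_erase h12mem, Finset.sum_insert (Finset.notMem_erase _ _), hr]
      at hcap
    have hnn : ∀ e ∈ CG.edgeFinset.erase s(1,2), 0 ≤ y r e := fun e _ => h0 r e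
    have hz : ∑ e ∈ CG.edgeFinset.erase s(1,2), y r e = 0 :=
      le_antisymm (by linarith) (Finset.sum_nonneg hnn)
    exact fun e he => (Finset.sum_eq_zero_iff_of_nonneg hnn).mp hz e he
  -- every edge is traversed by some robot other than r
  have hex : ∀ e ∈ CG.edgeFinset, ∃ s ∈ S, e ∈ (walk s).edges := by
    intro e he
    have hdem := h3 e (SimpleGraph.mem_edgeFinset.mp he)
    have hsplit : y r e + ∑ s ∈ S, y s e = Dem e := by
      have h := Finset.add_sum_erase Finset.univ (fun s => y s e) (Finset.mem_univ r)
      rw [hS]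
      exact h.trans hdem
    have hpos : 0 < ∑ s ∈ S, y s e := by
      by_cases h : e = s(1,2)
      · subst h
        have : Dem s(1,2) = 12 := by simp [Dem]
        rw [hr, this] at hsplit
        linarith
      · have hye : y r e = 0 := hy0 e (Finset.mem_erase.mpr ⟨h, he⟩)
        have : Dem e = 1 := by simp [Dem, h]
        rw [hye, this] at hsplit
        linarith
    by_contra hcon
    push_neg at hcon
    have : ∑ s ∈ S, y s e ≤ 0 := Finset.sum_nonpos fun s hs => by
      by_contra hlt
      push_neg at hlt
      exact hcon s hs (h1 s e hlt)
    linarith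
  have hT : ∀ e ∈ CG.edgeFinset, 1 ≤ ∑ s ∈ S, c s e := by
    intro e he
    obtain ⟨s, hs, hes⟩ := hex e he
    have hcnt : 1 ≤ c s e := List.count_pos_iff.mpr hes
    exact hcnt.trans (Finset.single_le_sum (f := fun t => c t e) (fun i _ => Nat.zero_le _) hs)
  have hparT : (∑ s ∈ S, c s s(0,2) + ∑ s ∈ S, c s s(1,2) + ∑ s ∈ S, c s s(2,3)) % 2
      = 0 := by
    rw [← Finset.sum_add_distrib, ← Finset.sum_add_distrib, Finset.sum_nat_mod]
    simp only [par2]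
    simp
  have hothers : 6 ≤ ∑ s ∈ S, (walk s).length := by
    have hsumlen : ∑ s ∈ S, (walk s).length
        = ∑ s ∈ S, c s s(0,1) + ∑ s ∈ S, c s s(0,2) + ∑ s ∈ S, c s s(0,3)
          + ∑ s ∈ S, c s s(1,2) + ∑ s ∈ S, c s s(2,3) := by
      rw [← Finset.sum_add_distrib, ← Finset.sum_add_distrib, ← Finset.sum_add_distrib,
        ← Finset.sum_add_distrib]
      exact Finset.sum_congr rfl fun s _ => hlen s
    have h1' := hT s(0,1) (by rw [hE]; decide)
    have h2' := hT s(0,2) (by rw [hE]; decide)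
    have h3' := hT s(0,3) (by rw [hE]; decide)
    have h4' := hT s(1,2) h12mem
    have h5' := hT s(2,3) (by rw [hE]; decide)
    omega
  have hfinal : ∑ s, (walk s).length = (walk r).length + ∑ s ∈ S, (walk s).length := by
    have h := Finset.add_sum_erase Finset.univ (fun s => (walk s).length) (Finset.mem_univ r)
    rw [hS]
    exact h.symm
  omega
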